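/- On a geometrically ruled surface X over a genus-g curve with e > 0, polarized by H = C_0 + βF with β > e, the line bundle O_X((2β+g-1-e)F) ⊗ π*M with M a general degree-0 line bundle on C is an Ulrich line bundle with respect to H. -/
import Mathlib


/-- on a geometrically ruled surface `π : X → C` with invariant
`e > 0`, polarized by `H = C_0 + βF` (`β > e`), the line bundle
`O_X((2β+g-1-e)F) ⊗ π*M`, with `M` a general degree-0 line bundle on `C`, is
Ulrich.  Divisor classes on `X` live in `DX`, generated by `C_0`, `F` and
pullbacks `πstar N` of classes on `C`; `h i D` is `h^i(X, O_X(D))`.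
Hypotheses: `K_X = -2C_0+(2g-2-e)F + π*k`; Serre duality; vanishing above the
dimension; Riemann–Roch `χ(aC_0+bF+π*N) = (a+1)(b+1-g-ae/2)`; vanishing of `h^0`
when the `C_0`-coefficient is negative; and genericity of `M` (the relevant
degree-`(g-1)` twists have no sections). -/
theorem ulrich_line_bundle_exists {DX PC : Type*} [AddCommGroup DX] [AddCommGroup PC]
    (g e β : ℤ) (he : 1 ≤ e) (hβ : e < β)
    (C0 F : DX) (πstar : PC →+ DX) (k M : PC)
    (K : DX) (hK : K = (-2) • C0 + (2 * g - 2 - e) • F + πstar k)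
    (h : ℕ → DX → ℕ)
    (hSerre : ∀ i ≤ 2, ∀ D : DX, h i D = h (2 - i) (K - D))
    (hdim : ∀ i > 2, ∀ D : DX, h i D = 0)
    (hchi : ∀ (a b : ℤ) (N : PC),
      ((h 0 (a • C0 + b • F + πstar N) : ℚ)
        - (h 1 (a • C0 + b • F + πstar N) : ℚ)
        + (h 2 (a • C0 + b • F + πstar N) : ℚ))
        = ((a : ℚ) + 1) * ((b : ℚ) + 1 - (g : ℚ) - (a : ℚ) * (e : ℚ) / 2))
    (hC0neg : ∀ (a b : ℤ) (N : PC), a < 0 → h 0 (a • C0 + b • F + πstar N) = 0)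
    (hgen : ∀ N : PC, (N = k - M ∨ N = M) → h 0 ((g - 1) • F + πstar N) = 0) :
    ∀ i : ℕ, ∀ t : ℤ, (t = 1 ∨ t = 2) →
      h i (((2 * β + g - 1 - e) • F + πstar M) - t • (C0 + β • F)) = 0 := by
  intro i t ht
  rcases ht with rfl | rfl
  · -- t = 1
    have hD : ((2 * β + g - 1 - e) • F + πstar M) - (1:ℤ) • (C0 + β • F)
        = (-1:ℤ) • C0 + (β + g - 1 - e) • F + πstar M := by
      module
    rw [hD]
    have hKD : K - ((-1:ℤ) • C0 + (β + g - 1 - e) • F + πstar M)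
        = (-1:ℤ) • C0 + (g - 1 - β) • F + πstar (k - M) := by
      rw [hK, map_sub]; module
    have h0 : h 0 ((-1:ℤ) • C0 + (β + g - 1 - e) • F + πstar M) = 0 :=
      hC0neg _ _ _ (by norm_num)
    have h2 : h 2 ((-1:ℤ) • C0 + (β + g - 1 - e) • F + πstar M) = 0 := by
      rw [hSerre 2 le_rfl, hKD]
      exact hC0neg _ _ _ (by norm_num)
    have h1 : h 1 ((-1:ℤ) • C0 + (β + g - 1 - e) • F + πstar M) = 0 := by
      have := hchi (-1) (β + g - 1 - e) M
      rw [h0, h2] at this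
      push_cast at this
      have : ((h 1 ((-1:ℤ) • C0 + (β + g - 1 - e) • F + πstar M) : ℚ)) = 0 := by
        linarith
      exact_mod_cast this
    match i with
    | 0 => exact h0
    | 1 => exact h1
    | 2 => exact h2
    | (n+3) => exact hdim _ (by omega) _
  · -- t = 2
    have hD : ((2 * β + g - 1 - e) • F + πstar M) - (2:ℤ) • (C0 + β • F)
        = (-2:ℤ) • C0 + (g - 1 - e) • F + πstar M := by
      module
    rw [hD]
    have hKD : K - ((-2:ℤ) • C0 + (g - 1 - e) • F + πstar M)
        = (g - 1) • F + πstar (k - M) := by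
      rw [hK, map_sub]; module
    have h0 : h 0 ((-2:ℤ) • C0 + (g - 1 - e) • F + πstar M) = 0 :=
      hC0neg _ _ _ (by norm_num)
    have h2 : h 2 ((-2:ℤ) • C0 + (g - 1 - e) • F + πstar M) = 0 := by
      rw [hSerre 2 le_rfl, hKD]
      exact hgen _ (Or.inl rfl)
    have h1 : h 1 ((-2:ℤ) • C0 + (g - 1 - e) • F + πstar M) = 0 := by
      have := hchi (-2) (g - 1 - e) M
      rw [h0, h2] at this
      push_cast at this
      have : ((h 1 ((-2:ℤ) • C0 + (g - 1 - e) • F + πstar M) : ℚ)) = 0 := by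
        nlinarith [this]
      exact_mod_cast this
    match i with
    | 0 => exact h0
    | 1 => exact h1
    | 2 => exact h2
    | (n+3) => exact hdim _ (by omega) _
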